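/- Let F be a field of characteristic zero and σ the shift automorphism of F(y) (y ↦ y+1). For every nonzero rational function f ∈ F(y), there exist nonzero K, S ∈ F(y) with K σ-reduced (writing K = u/v in lowest terms, gcd(u, σ^ℓ(v)) = 1 for every integer ℓ) such that f = K · σ(S)/S. -/

import Mathlib

open Polynomial

section Aux

lemma raut_mul_apply {R : Type*} [Semiring R] (e₁ e₂ : RingAut R) (x : R) :
    (e₁ * e₂) x = e₁ (e₂ x) := rfl

lemma raut_one_apply {R : Type*} [Semiring R] (x : R) : (1 : RingAut R) x = x := rfl

variable {F : Type*} [Field F] (τ : RingAut (Polynomial F)) (σ : RingAut (RatFunc F))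
  (hcompat : ∀ p : Polynomial F,
      σ (algebraMap (Polynomial F) (RatFunc F) p) = algebraMap (Polynomial F) (RatFunc F) (τ p))

include hcompat in
/-- `σ^m` of an algebraMap is algebraMap of `τ^m`. -/
lemma aux_pow_compat (m : ℕ) (p : Polynomial F) :
    (σ ^ m) (algebraMap (Polynomial F) (RatFunc F) p)
      = algebraMap (Polynomial F) (RatFunc F) ((τ ^ m) p) := by
  induction m with
  | zero => rw [pow_zero, pow_zero, raut_one_apply, raut_one_apply]
  | succ m ih =>
    rw [pow_succ', pow_succ']
    have h1 : (σ * σ ^ m) (algebraMap (Polynomial F) (RatFunc F) p)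
        = σ ((σ ^ m) (algebraMap (Polynomial F) (RatFunc F) p)) := rfl
    have h2 : (τ * τ ^ m) p = τ ((τ ^ m) p) := rfl
    rw [h1, h2, ih, hcompat]

/-- Telescoping: for a nonzero `a` and `T = ∏_{i<m} σ^i a`, `σ T * a = T * σ^m a`. -/
lemma aux_telescope (m : ℕ) (a : RatFunc F) :
    σ (∏ i ∈ Finset.range m, (σ ^ i) a) * a
      = (∏ i ∈ Finset.range m, (σ ^ i) a) * (σ ^ m) a := by
  induction m with
  | zero => simp [raut_one_apply]
  | succ m ih =>
    rw [Finset.prod_range_succ, map_mul]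
    have h1 : σ ((σ ^ m) a) = (σ ^ (m + 1)) a := by
      rw [pow_succ']; rfl
    rw [h1]
    calc σ (∏ i ∈ Finset.range m, (σ ^ i) a) * (σ ^ (m + 1)) a * a
        = (σ (∏ i ∈ Finset.range m, (σ ^ i) a) * a) * (σ ^ (m + 1)) a := by ring
      _ = ((∏ i ∈ Finset.range m, (σ ^ i) a) * (σ ^ m) a) * (σ ^ (m + 1)) a := by rw [ih]

include hcompat in
/-- For any `j : ℤ` and nonzero polynomial `u`, `algebraMap (τ^j u) / algebraMap u = σ T / T`
for some nonzero `T`. -/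
lemma aux_shift_quot (j : ℤ) (u : Polynomial F) (hu : u ≠ 0) :
    ∃ T : RatFunc F, T ≠ 0 ∧
      algebraMap (Polynomial F) (RatFunc F) ((τ ^ j) u)
        / algebraMap (Polynomial F) (RatFunc F) u = σ T / T := by
  -- first the natural-number case
  have key : ∀ (m : ℕ) (v : Polynomial F), v ≠ 0 →
      ∃ T : RatFunc F, T ≠ 0 ∧
        algebraMap (Polynomial F) (RatFunc F) ((τ ^ m) v)
          / algebraMap (Polynomial F) (RatFunc F) v = σ T / T := by
    intro m v hv
    set a : RatFunc F := algebraMap (Polynomial F) (RatFunc F) v with ha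
    have hane : a ≠ 0 := by
      simpa [ha] using (RatFunc.algebraMap_ne_zero hv)
    refine ⟨∏ i ∈ Finset.range m, (σ ^ i) a, ?_, ?_⟩
    · exact Finset.prod_ne_zero_iff.2 fun i _ => by
        simpa using (map_ne_zero_iff ((σ ^ i) : RatFunc F ≃+* RatFunc F)
          (RingEquiv.injective _)).2 hane
    · have htel := aux_telescope σ m a
      have hT : (∏ i ∈ Finset.range m, (σ ^ i) a) ≠ 0 :=
        Finset.prod_ne_zero_iff.2 fun i _ => by
          simpa using (map_ne_zero_iff ((σ ^ i) : RatFunc F ≃+* RatFunc F)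
            (RingEquiv.injective _)).2 hane
      have hpow := aux_pow_compat τ σ hcompat m v
      rw [← hpow, ← ha, div_eq_div_iff hane hT]
      linear_combination -htel
  obtain ⟨n, hn | hn⟩ := Int.eq_nat_or_neg j
  · obtain ⟨T, hT, hTe⟩ := key n u hu
    refine ⟨T, hT, ?_⟩
    rw [hn, zpow_natCast] at *
    exact hTe
  · -- j = -n : apply positive case to v := τ^j u
    set v : Polynomial F := (τ ^ j) u with hv
    have hvne : v ≠ 0 := by
      simpa [hv] using (map_ne_zero_iff ((τ ^ j) : Polynomial F ≃+* Polynomial F)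
        (RingEquiv.injective _)).2 hu
    have huv : (τ ^ (n : ℕ)) v = u := by
      rw [hv, ← raut_mul_apply, ← zpow_natCast, ← zpow_add, hn]
      simp [raut_one_apply]
    obtain ⟨T, hT, hTe⟩ := key n v hvne
    rw [huv] at hTe
    refine ⟨T⁻¹, inv_ne_zero hT, ?_⟩
    have hσT : σ T ≠ 0 := by
      simpa using (map_ne_zero_iff (σ : RatFunc F ≃+* RatFunc F)
        (RingEquiv.injective _)).2 hT
    have hune : algebraMap (Polynomial F) (RatFunc F) u ≠ 0 := RatFunc.algebraMap_ne_zero hu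
    have hvme : algebraMap (Polynomial F) (RatFunc F) v ≠ 0 := RatFunc.algebraMap_ne_zero hvne
    rw [map_inv₀]
    rw [div_eq_div_iff hvme hT] at hTe
    rw [div_eq_div_iff hune (inv_ne_zero hT)]
    field_simp
    linear_combination -hTe
  
include hcompat in
/-- Main induction. -/
lemma aux_main (n : ℕ) : ∀ p q : Polynomial F, p ≠ 0 → q ≠ 0 → IsCoprime p q →
    p.natDegree + q.natDegree ≤ n →
    ∃ K S : RatFunc F, K ≠ 0 ∧ S ≠ 0 ∧
      (∀ ℓ : ℤ, IsCoprime K.num ((τ ^ ℓ) K.denom)) ∧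
      algebraMap (Polynomial F) (RatFunc F) p / algebraMap (Polynomial F) (RatFunc F) q
        = K * σ S / S := by
  induction n using Nat.strong_induction_on with
  | _ n IH =>
  intro p q hp hq hpq hdeg
  classical
  by_cases hgood : ∀ ℓ : ℤ, IsCoprime p ((τ ^ ℓ) q)
  · -- base case : K = p/q, S = 1
    refine ⟨algebraMap (Polynomial F) (RatFunc F) p / algebraMap (Polynomial F) (RatFunc F) q,
      1, ?_, one_ne_zero, ?_, by simp⟩
    · exact div_ne_zero (RatFunc.algebraMap_ne_zero hp) (RatFunc.algebraMap_ne_zero hq)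
    · intro ℓ
      have h1 := RatFunc.num_div_dvd p hq
      have h2 := RatFunc.denom_div_dvd p q
      have h3 : (τ ^ ℓ) (RatFunc.denom
          (algebraMap (Polynomial F) (RatFunc F) p / algebraMap (Polynomial F) (RatFunc F) q))
          ∣ (τ ^ ℓ) q := (τ ^ ℓ).toRingHom.map_dvd h2
      exact ((hgood ℓ).of_isCoprime_of_dvd_left h1).of_isCoprime_of_dvd_right h3
  · push_neg at hgood
    obtain ⟨ℓ, hℓ⟩ := hgood
    -- extract g = gcd p (τ^ℓ q)
    set g : Polynomial F := EuclideanDomain.gcd p ((τ ^ ℓ) q) with hg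
    have hgdvd1 : g ∣ p := EuclideanDomain.gcd_dvd_left _ _
    have hgdvd2 : g ∣ (τ ^ ℓ) q := EuclideanDomain.gcd_dvd_right _ _
    have hgunit : ¬ IsUnit g := fun h => hℓ (EuclideanDomain.gcd_isUnit_iff.1 h)
    obtain ⟨p₁, hp₁⟩ := hgdvd1
    obtain ⟨r, hr⟩ := hgdvd2
    have hgne : g ≠ 0 := fun h => hp (by rw [hp₁, h, zero_mul])
    have hp₁ne : p₁ ≠ 0 := fun h => hp (by rw [hp₁, h, mul_zero])
    have hrne : r ≠ 0 := by
      intro h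
      apply RingEquiv.injective ((τ ^ ℓ) : Polynomial F ≃+* Polynomial F) |>.ne hq
      rw [hr, h, mul_zero, map_zero]
    -- q = τ^{-ℓ} g * q₁
    set g' : Polynomial F := (τ ^ (-ℓ)) g with hg'
    set q₁ : Polynomial F := (τ ^ (-ℓ)) r with hq₁
    have hqfact : q = g' * q₁ := by
      have : (τ ^ (-ℓ)) ((τ ^ ℓ) q) = q := by
        rw [← raut_mul_apply, ← zpow_add]; simp [raut_one_apply]
      rw [hg', hq₁, ← map_mul, ← hr, this]
    have hg'ne : g' ≠ 0 := by
      simpa [hg'] using (map_ne_zero_iff ((τ ^ (-ℓ)) : Polynomial F ≃+* Polynomial F)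
        (RingEquiv.injective _)).2 hgne
    have hq₁ne : q₁ ≠ 0 := by
      simpa [hq₁] using (map_ne_zero_iff ((τ ^ (-ℓ)) : Polynomial F ≃+* Polynomial F)
        (RingEquiv.injective _)).2 hrne
    -- coprimality of p₁, q₁
    have hcop₁ : IsCoprime p₁ q₁ :=
      (hpq.of_isCoprime_of_dvd_left ⟨g, by rw [hp₁, mul_comm]⟩).of_isCoprime_of_dvd_right
        ⟨g', by rw [hqfact, mul_comm]⟩
    -- degree bookkeeping
    have hgdeg : 0 < g.natDegree := by
      by_contra h
      push_neg at h
      have h0 : g.natDegree = 0 := Nat.le_zero.mp h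
      exact hgunit (isUnit_iff_degree_eq_zero.2
        (by rw [degree_eq_natDegree hgne, h0]; rfl))
    have hdp : p.natDegree = g.natDegree + p₁.natDegree := by
      rw [hp₁, natDegree_mul hgne hp₁ne]
    have hdq : q.natDegree = g'.natDegree + q₁.natDegree := by
      rw [hqfact, natDegree_mul hg'ne hq₁ne]
    have hlt : p₁.natDegree + q₁.natDegree < n := by omega
    obtain ⟨K, S₁, hK, hS₁, hKcop, hKe⟩ :=
      IH _ hlt p₁ q₁ hp₁ne hq₁ne hcop₁ le_rfl
    -- the shift quotient g / g' = σ T / T with g = τ^ℓ g'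
    have hgg' : (τ ^ ℓ) g' = g := by
      rw [hg', ← raut_mul_apply, ← zpow_add]; simp [raut_one_apply]
    obtain ⟨T, hT, hTe⟩ := aux_shift_quot τ σ hcompat ℓ g' hg'ne
    rw [hgg'] at hTe
    refine ⟨K, S₁ * T, hK, mul_ne_zero hS₁ hT, hKcop, ?_⟩
    have hfact : algebraMap (Polynomial F) (RatFunc F) p / algebraMap (Polynomial F) (RatFunc F) q
        = (algebraMap (Polynomial F) (RatFunc F) p₁ / algebraMap (Polynomial F) (RatFunc F) q₁)
          * (algebraMap (Polynomial F) (RatFunc F) g / algebraMap (Polynomial F) (RatFunc F) g') := by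
      rw [hp₁, hqfact, map_mul, map_mul]
      rw [div_mul_div_comm]
      ring_nf
    rw [hfact, hKe, hTe, map_mul]
    have hσS₁ : σ S₁ ≠ 0 := (map_ne_zero_iff (σ : RatFunc F ≃+* RatFunc F)
      (RingEquiv.injective _)).2 hS₁
    have hσT : σ T ≠ 0 := (map_ne_zero_iff (σ : RatFunc F ≃+* RatFunc F)
      (RingEquiv.injective _)).2 hT
    field_simp

end Aux

/-- Every nonzero rational function admits a rational normal form `(K, S)` with
σ-reduced kernel `K`: `f = K · σ(S)/S`, where `gcd(num K, τ^ℓ(denom K)) = 1` for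
every integer `ℓ` (τ being the shift on polynomials corresponding to σ). -/
theorem exists_rational_normal_form (F : Type*) [Field F] [CharZero F]
    (τ : RingAut (Polynomial F)) (σ : RingAut (RatFunc F))
    (hτC : ∀ c : F, τ (C c) = C c)
    (hτX : τ X = X + 1)
    (hcompat : ∀ p : Polynomial F,
      σ (algebraMap (Polynomial F) (RatFunc F) p) = algebraMap (Polynomial F) (RatFunc F) (τ p))
    (f : RatFunc F) (hf : f ≠ 0) :
    ∃ K S : RatFunc F, K ≠ 0 ∧ S ≠ 0 ∧
      (∀ ℓ : ℤ, IsCoprime K.num ((τ ^ ℓ) K.denom)) ∧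
      f = K * σ S / S := by
  obtain ⟨K, S, hK, hS, hcop, he⟩ :=
    aux_main τ σ hcompat (f.num.natDegree + f.denom.natDegree) f.num f.denom
      (RatFunc.num_ne_zero hf) (RatFunc.denom_ne_zero f) (RatFunc.isCoprime_num_denom f)
      le_rfl
  exact ⟨K, S, hK, hS, hcop, by rw [← he, RatFunc.num_div_denom]⟩
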